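/- With the setup as in the context, assume moreover that δ_j > 0 for all 1 ≤ j ≤ J. Then each P_j is a probability mass function on R/Q: P_j(ā) ≥ 0 for all ā ∈ R/Q, and ∑_{ā ∈ R/Q} P_j(ā) = 1, for every 0 ≤ j ≤ J. -/

import Mathlib

open scoped Classical

/-- If `δ_j > 0` for all `1 ≤ j ≤ J`, then each `P_j` is a probability mass function on
`R/Q`: it is nonnegative and sums to `1`. -/
theorem stmt9
    -- R is a Dedekind domain (not a field) with all nontrivial quotients finite
    (R : Type*) [CommRing R] [IsDedekindDomain R] (hnotfield : ¬ IsField R)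
    (hfin : ∀ I : Ideal R, I ≠ ⊥ → Finite (R ⧸ I))
    -- the collection A = {a i + I i}
    (m : ℕ) (a : Fin m → R) (I : Fin m → Ideal R)
    (hIbot : ∀ i, I i ≠ ⊥) (hItop : ∀ i, I i ≠ ⊤)
    -- Q = I_1 ∩ ⋯ ∩ I_m with prime factorization P_1^{ν_1} ⋯ P_J^{ν_J},
    -- |P_1| ≤ ⋯ ≤ |P_J|
    (Q : Ideal R) (hQ : Q = ⨅ i, I i)
    (J : ℕ) (P : ℕ → Ideal R) (ν : ℕ → ℕ)
    (hPprime : ∀ j ∈ Finset.Icc 1 J, (P j).IsPrime ∧ P j ≠ ⊥)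
    (hν : ∀ j ∈ Finset.Icc 1 J, 1 ≤ ν j)
    (hPinj : ∀ j ∈ Finset.Icc 1 J, ∀ k ∈ Finset.Icc 1 J, P j = P k → j = k)
    (hPord : ∀ j ∈ Finset.Icc 1 J, ∀ k ∈ Finset.Icc 1 J, j ≤ k →
      Nat.card (R ⧸ P j) ≤ Nat.card (R ⧸ P k))
    (hfact : Q = ∏ j ∈ Finset.Icc 1 J, P j ^ ν j)
    -- the partial products Q_j (so Q_0 = R)
    (Qp : ℕ → Ideal R) (hQp : ∀ j ≤ J, Qp j = ∏ i ∈ Finset.Icc 1 j, P i ^ ν i)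
    -- the sets B_j ⊆ R/Q
    (B : ℕ → Set (R ⧸ Q))
    (hB : ∀ j ∈ Finset.Icc 1 J, B j =
      ⋃ i ∈ {i : Fin m | I i ∣ Qp j ∧ ¬ I i ∣ Qp (j - 1)},
        Ideal.Quotient.mk Q '' {r : R | r - a i ∈ I i})
    -- the fibres F_j(ā) of the projections π_j : R/Q → R/Q_j
    (Fib : ℕ → (R ⧸ Q) → Set (R ⧸ Q))
    (hFib : ∀ j ≤ J, ∀ x, Fib j x =
      {y : R ⧸ Q | y - x ∈ Ideal.map (Ideal.Quotient.mk Q) (Qp j)})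
    -- α_j(ā) = #(F_{j-1}(ā) ∩ B_j) / #F_{j-1}(ā)
    (α : ℕ → (R ⧸ Q) → ℝ)
    (hα : ∀ j ∈ Finset.Icc 1 J, ∀ x, α j x =
      (Nat.card ↥(Fib (j - 1) x ∩ B j) : ℝ) / (Nat.card ↥(Fib (j - 1) x) : ℝ))
    -- the distortion parameters δ_j ∈ [0, 1/2] with moreover δ_j > 0
    (δ : ℕ → ℝ) (hδ : ∀ j ∈ Finset.Icc 1 J, 0 < δ j ∧ δ j ≤ 1 / 2)
    -- the distorted measures P_0, …, P_J
    (μ : ℕ → (R ⧸ Q) → ℝ)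
    (hμ0 : ∀ x, μ 0 x = 1 / (Nat.card (R ⧸ Q) : ℝ))
    (hμ : ∀ j ∈ Finset.Icc 1 J, ∀ x, μ j x =
      if α j x < δ j then
        μ (j - 1) x * (if x ∈ B j then 0 else 1) / (1 - α j x)
      else
        μ (j - 1) x * (α j x - if x ∈ B j then δ j else 0) / (α j x * (1 - δ j)))
    -- the conclusion: each P_j is a probability mass function on R/Q
    : ∀ j ≤ J, (∀ x : R ⧸ Q, 0 ≤ μ j x) ∧ (∑ᶠ x : R ⧸ Q, μ j x) = 1 := by
  classical
  -- Q is nonzero, hence R ⧸ Q is finite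
  have hQbot : Q ≠ ⊥ := by
    rw [hfact]
    have h0 : ∀ j ∈ Finset.Icc 1 J, P j ^ ν j ≠ (0 : Ideal R) := by
      intro j hj
      exact pow_ne_zero _ (by simpa using (hPprime j hj).2)
    have := Finset.prod_ne_zero_iff.mpr h0
    simpa using this
  have hFinQ : Finite (R ⧸ Q) := hfin Q hQbot
  letI : Fintype (R ⧸ Q) := Fintype.ofFinite _
  have hNpos : 0 < (Nat.card (R ⧸ Q) : ℝ) := by
    exact_mod_cast Nat.card_pos
  -- monotonicity of the partial products
  have hQmono : ∀ k n : ℕ, k ≤ n → n ≤ J → Qp n ≤ Qp k := by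
    intro k n hkn hnJ
    rw [hQp n hnJ, hQp k (hkn.trans hnJ)]
    rw [← Finset.prod_sdiff (Finset.Icc_subset_Icc_right hkn)]
    apply Ideal.mul_le_right
  -- α is always nonnegative
  have hα0 : ∀ j ∈ Finset.Icc 1 J, ∀ x, 0 ≤ α j x := by
    intro j hj x
    rw [hα j hj x]
    positivity
  -- membership in B j is invariant under translation by Qp j
  have hBinv : ∀ j ∈ Finset.Icc 1 J, ∀ x y : R ⧸ Q,
      y - x ∈ Ideal.map (Ideal.Quotient.mk Q) (Qp j) → (x ∈ B j → y ∈ B j) := by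
    intro j hj x y hxy hx
    obtain ⟨q, hq, hqe⟩ := Ideal.mem_map_iff_of_surjective _
      Ideal.Quotient.mk_surjective |>.mp hxy
    rw [hB j hj] at hx ⊢
    simp only [Set.mem_iUnion, Set.mem_image, Set.mem_setOf_eq] at hx ⊢
    obtain ⟨i, hi, r, hr, hrx⟩ := hx
    refine ⟨i, hi, r + q, ?_, ?_⟩
    · have hle : Qp j ≤ I i := Ideal.le_of_dvd hi.1
      have : r + q - a i = (r - a i) + q := by ring
      rw [this]
      exact (I i).add_mem hr (hle hq)
    · rw [map_add, hrx, hqe]; ring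
  -- the measures μ n are constant on fibres of π_n
  have hconst : ∀ n, n ≤ J → ∀ x y : R ⧸ Q,
      y - x ∈ Ideal.map (Ideal.Quotient.mk Q) (Qp n) → μ n y = μ n x := by
    intro n
    induction n with
    | zero => intro _ x y _; rw [hμ0, hμ0]
    | succ k ih =>
      intro hn x y hxy
      have hk : k ≤ J := by omega
      have hmem : k + 1 ∈ Finset.Icc 1 J := by
        simp only [Finset.mem_Icc]; omega
      have hxyk : y - x ∈ Ideal.map (Ideal.Quotient.mk Q) (Qp k) :=
        Ideal.map_mono (hQmono k (k+1) (by omega) hn) hxy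
      have hFibeq : Fib k y = Fib k x := by
        rw [hFib k hk, hFib k hk]
        ext z
        simp only [Set.mem_setOf_eq]
        constructor
        · intro h
          have := add_mem h hxyk
          rwa [sub_add_sub_cancel] at this
        · intro h
          have := sub_mem h hxyk
          rwa [sub_sub_sub_cancel_right] at this
      have hBiff : (y ∈ B (k+1)) ↔ (x ∈ B (k+1)) := by
        constructor
        · intro h
          refine hBinv (k+1) hmem y x ?_ h
          have : x - y = -(y - x) := by ring
          rw [this]; exact neg_mem hxy
        · exact hBinv (k+1) hmem x y hxy
      have hαeq : α (k+1) y = α (k+1) x := by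
        rw [hα (k+1) hmem y, hα (k+1) hmem x]
        simp only [Nat.add_sub_cancel, hFibeq]
      rw [hμ (k+1) hmem y, hμ (k+1) hmem x]
      simp only [Nat.add_sub_cancel, hαeq, hBiff, ih hk x y hxyk]
  -- main induction
  intro j hjJ
  induction j with
  | zero =>
    constructor
    · intro x; rw [hμ0]; positivity
    · rw [finsum_eq_sum_of_fintype]
      rw [Finset.sum_congr rfl (fun x _ => hμ0 x)]
      rw [Finset.sum_const, nsmul_eq_mul]
      rw [Finset.card_univ, ← Nat.card_eq_fintype_card]
      field_simp
  | succ k ih =>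
    have hk : k ≤ J := by omega
    obtain ⟨ihpos, ihsum⟩ := ih hk
    have hmem : k + 1 ∈ Finset.Icc 1 J := by
      simp only [Finset.mem_Icc]; omega
    obtain ⟨hδ0, hδhalf⟩ := hδ (k+1) hmem
    -- nonnegativity
    have hpos : ∀ x : R ⧸ Q, 0 ≤ μ (k+1) x := by
      intro x
      rw [hμ (k+1) hmem x]
      simp only [Nat.add_sub_cancel]
      have hax := hα0 (k+1) hmem x
      split_ifs with h1 h2
      · simp
      · exact div_nonneg (by simpa using ihpos x) (by linarith)
      · exact div_nonneg (mul_nonneg (ihpos x) (by linarith))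
          (mul_nonneg hax (by linarith))
      · exact div_nonneg (mul_nonneg (ihpos x) (by linarith))
          (mul_nonneg hax (by linarith))
    refine ⟨hpos, ?_⟩
    -- the sum over fibres
    set Jm : Ideal (R ⧸ Q) := Ideal.map (Ideal.Quotient.mk Q) (Qp k) with hJm
    letI : Fintype ((R ⧸ Q) ⧸ Jm) := Fintype.ofFinite _
    have key : ∀ x₀ : R ⧸ Q,
        ∑ y ∈ Finset.univ.filter (fun y => Ideal.Quotient.mk Jm y = Ideal.Quotient.mk Jm x₀),
          μ (k+1) y
        = ∑ y ∈ Finset.univ.filter (fun y => Ideal.Quotient.mk Jm y = Ideal.Quotient.mk Jm x₀),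
          μ k y := by
      intro x₀
      set F : Finset (R ⧸ Q) :=
        Finset.univ.filter (fun y => Ideal.Quotient.mk Jm y = Ideal.Quotient.mk Jm x₀) with hF
      have hmemF : ∀ y, y ∈ F ↔ y - x₀ ∈ Jm := by
        intro y
        simp only [hF, Finset.mem_filter, Finset.mem_univ, true_and]
        exact Ideal.Quotient.mk_eq_mk_iff_sub_mem y x₀
      have hx₀F : x₀ ∈ F := by rw [hmemF]; simp
      -- F is the fibre
      have hFibF : ∀ y ∈ F, Fib k y = (F : Set (R ⧸ Q)) := by
        intro y hy
        rw [hFib k hk y]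
        ext z
        simp only [Set.mem_setOf_eq, Finset.coe_filter, Finset.mem_coe, hmemF]
        constructor
        · intro h
          have := add_mem h ((hmemF y).mp hy)
          rwa [sub_add_sub_cancel] at this
        · intro h
          have := sub_mem h ((hmemF y).mp hy)
          rwa [sub_sub_sub_cancel_right] at this
      have hαconst : ∀ y ∈ F, α (k+1) y = α (k+1) x₀ := by
        intro y hy
        rw [hα (k+1) hmem y, hα (k+1) hmem x₀]
        simp only [Nat.add_sub_cancel]
        rw [hFibF y hy, hFibF x₀ hx₀F]
      have hμconst : ∀ y ∈ F, μ k y = μ k x₀ := by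
        intro y hy
        exact hconst k hk x₀ y ((hmemF y).mp hy)
      set p : ℝ := μ k x₀ with hp
      set a₀ : ℝ := α (k+1) x₀ with ha₀
      -- cardinalities
      set f : ℕ := Nat.card ↥(Fib k x₀) with hf
      set c : ℕ := Nat.card ↥(Fib k x₀ ∩ B (k+1)) with hc
      have hFcard : F.card = f := by
        rw [hf, Nat.card_coe_set_eq, Set.ncard_eq_toFinset_card']
        congr 1
        ext y
        rw [Set.mem_toFinset, hFibF x₀ hx₀F]
        simp
      have hFBcard : (F.filter (fun y => y ∈ B (k+1))).card = c := by
        rw [hc, Nat.card_coe_set_eq, Set.ncard_eq_toFinset_card']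
        congr 1
        ext y
        rw [Set.mem_toFinset, Set.mem_inter_iff, hFibF x₀ hx₀F]
        simp [Finset.mem_filter]
      have hfpos : 0 < f := by
        rw [← hFcard]
        exact Finset.card_pos.mpr ⟨x₀, hx₀F⟩
      have ha₀val : a₀ = (c : ℝ) / (f : ℝ) := by
        rw [ha₀, hα (k+1) hmem x₀]
        simp only [Nat.add_sub_cancel, ← hf, ← hc]
      have hfne : (f : ℝ) ≠ 0 := by positivity
      have hcval : (c : ℝ) = a₀ * f := by
        rw [ha₀val]; field_simp
      have hcle : c ≤ f := by
        rw [← hFcard, ← hFBcard]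
        exact Finset.card_filter_le _ _
      -- rewrite both sides
      have hRHS : ∑ y ∈ F, μ k y = (f : ℝ) * p := by
        rw [Finset.sum_congr rfl hμconst, Finset.sum_const, nsmul_eq_mul, hFcard]
      rw [hRHS]
      have hLHS : ∀ y ∈ F, μ (k+1) y =
          if a₀ < δ (k+1) then
            p * (if y ∈ B (k+1) then 0 else 1) / (1 - a₀)
          else
            p * (a₀ - if y ∈ B (k+1) then δ (k+1) else 0) / (a₀ * (1 - δ (k+1))) := by
        intro y hy
        rw [hμ (k+1) hmem y]
        simp only [Nat.add_sub_cancel, hαconst y hy, hμconst y hy]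
      rw [Finset.sum_congr rfl hLHS]
      rw [← Finset.sum_filter_add_sum_filter_not F (fun y => y ∈ B (k+1))]
      have hsum1 : ∀ (g : ℝ) (h : ℝ),
          (∑ y ∈ F.filter (fun y => y ∈ B (k+1)),
            (if y ∈ B (k+1) then g else h)) = c * g := by
        intro g h
        rw [Finset.sum_congr rfl (fun y hy => if_pos (Finset.mem_filter.mp hy).2)]
        rw [Finset.sum_const, nsmul_eq_mul, hFBcard]
      have hsum2 : ∀ (g : ℝ) (h : ℝ),
          (∑ y ∈ F.filter (fun y => ¬ y ∈ B (k+1)),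
            (if y ∈ B (k+1) then g else h)) = ((f : ℝ) - c) * h := by
        intro g h
        rw [Finset.sum_congr rfl (fun y hy => if_neg (Finset.mem_filter.mp hy).2)]
        rw [Finset.sum_const, nsmul_eq_mul]
        congr 1
        have := Finset.card_filter_add_card_filter_not
          (s := F) (p := fun y => y ∈ B (k+1))
        have h2 : (F.filter (fun y => ¬ y ∈ B (k+1))).card = f - c := by omega
        rw [h2, Nat.cast_sub hcle]
      by_cases hcase : a₀ < δ (k+1)
      · simp only [if_pos hcase]
        have e1 : ∀ y, (p * (if y ∈ B (k+1) then (0:ℝ) else 1) / (1 - a₀)) =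
            (if y ∈ B (k+1) then p * 0 / (1 - a₀) else p * 1 / (1 - a₀)) := by
          intro y; split_ifs <;> rfl
        rw [Finset.sum_congr rfl (fun y _ => e1 y), Finset.sum_congr rfl (fun y _ => e1 y)]
        rw [hsum1, hsum2]
        have hne : (1 : ℝ) - a₀ ≠ 0 := by
          have := hα0 (k+1) hmem x₀
          rw [← ha₀] at this
          intro h; nlinarith
        rw [hcval]
        field_simp
        ring
      · simp only [if_neg hcase]
        have ha₀pos : 0 < a₀ := lt_of_lt_of_le hδ0 (not_lt.mp hcase)
        have e1 : ∀ y, (p * (a₀ - if y ∈ B (k+1) then δ (k+1) else 0) / (a₀ * (1 - δ (k+1)))) =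
            (if y ∈ B (k+1) then p * (a₀ - δ (k+1)) / (a₀ * (1 - δ (k+1)))
              else p * (a₀ - 0) / (a₀ * (1 - δ (k+1)))) := by
          intro y; split_ifs <;> rfl
        rw [Finset.sum_congr rfl (fun y _ => e1 y), Finset.sum_congr rfl (fun y _ => e1 y)]
        rw [hsum1, hsum2]
        have hδne : (1 : ℝ) - δ (k+1) ≠ 0 := by intro h; nlinarith
        rw [hcval]
        field_simp
        ring
    -- assemble
    rw [finsum_eq_sum_of_fintype, ← Finset.sum_fiberwise Finset.univ
      (fun y => Ideal.Quotient.mk Jm y) (fun y => μ (k+1) y)]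
    rw [finsum_eq_sum_of_fintype, ← Finset.sum_fiberwise Finset.univ
      (fun y => Ideal.Quotient.mk Jm y) (fun y => μ k y)] at ihsum
    rw [← ihsum]
    apply Finset.sum_congr rfl
    intro cl _
    obtain ⟨x₀, rfl⟩ := Ideal.Quotient.mk_surjective cl
    exact key x₀
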